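/- Let W be a complete positive ordered abelian semigroup that contains a full sequence. Then W has a largest element p, i.e. an element p ∈ W with w ≤ p for all w ∈ W; moreover p can be taken to be the supremum of the sequence (n·u), where u is the supremum of any full sequence in W. -/
import Mathlib


namespace Stmt4

variable {W : Type*} [AddCommSemigroup W] [PartialOrder W]

/-- `rep n x` is the `(n+1)`-fold sum `x + x + ⋯ + x`, so that `rep n x = (n+1)·x`. -/
def rep : ℕ → W → W
  | 0, x => x
  | n + 1, x => rep n x + x

/-- `sumTo y n = y 0 + y 1 + ⋯ + y n`. -/
def sumTo (y : ℕ → W) : ℕ → W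
  | 0 => y 0
  | n + 1 => sumTo y n + y (n + 1)

/-- `x ∝ y` : `x ≤ n·y` for some positive integer `n` (encoded as `n + 1`, `n : ℕ`). -/
def Propto (x y : W) : Prop := ∃ n : ℕ, x ≤ rep n y

/-- `x <_s y` : `(k+1)·x ≤ k·y` for some positive integer `k`. -/
def StDom (x y : W) : Prop := ∃ k : ℕ, rep (k + 1) x ≤ rep k y

/-- `x ≪ y` : for every increasing sequence whose supremum exists and dominates `y`,
some term of the sequence dominates `x`. -/
def CC (x y : W) : Prop :=
  ∀ f : ℕ → W, Monotone f → ∀ s : W, IsLUB (Set.range f) s → y ≤ s → ∃ n, x ≤ f n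

/-- `W` is complete: every increasing sequence has a supremum, and `x ≤ y` holds as soon
as `x' ≤ y` for every `x' ≪ x`. -/
def Complete (W : Type*) [AddCommSemigroup W] [PartialOrder W] : Prop :=
  (∀ f : ℕ → W, Monotone f → ∃ s : W, IsLUB (Set.range f) s) ∧
    ∀ x y : W, (∀ x' : W, CC x' x → x' ≤ y) → x ≤ y

/-- A full sequence: increasing, and for all `y' ≪ y` one has `y' ∝ x n` for some `n`. -/
def FullSeq (x : ℕ → W) : Prop :=
  Monotone x ∧ ∀ y' y : W, CC y' y → ∃ n, Propto y' (x n)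

/-- A full element: `y' ∝ x` for all `y' ≪ y`. -/
def FullElem (x : W) : Prop := ∀ y' y : W, CC y' y → Propto y' x

/-- The Corona Factorization Property for semigroups: for every full sequence `(x_n)`,
every sequence `(y_n)`, every `x' ≪ x_0` and every positive integer `m` (encoded `m+1`)
with `x_n ≤ m·y_n` for all `n`, one has `x' ≤ y_0 + ⋯ + y_k` for some `k`. -/
def CFP (W : Type*) [AddCommSemigroup W] [PartialOrder W] : Prop :=
  ∀ x : ℕ → W, FullSeq x → ∀ y : ℕ → W, ∀ x' : W, ∀ m : ℕ,
    CC x' (x 0) → (∀ n, x n ≤ rep m (y n)) → ∃ k, x' ≤ sumTo y k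


/-- A complete positive ordered abelian semigroup containing a full sequence has a largest
element `p`, which can be taken to be the supremum of the sequence `(n·u)` (here
`rep n u = (n+1)·u`), where `u` is the supremum of any full sequence. -/
theorem exists_largest_element
    (hadd : ∀ x y z : W, x ≤ y → x + z ≤ y + z)
    (hpos : ∀ x z : W, x ≤ x + z)
    (hcomplete : Complete W)
    (x : ℕ → W) (hx : FullSeq x)
    (u : W) (hu : IsLUB (Set.range x) u) :
    ∃ p : W, IsLUB (Set.range fun n => rep n u) p ∧ ∀ w : W, w ≤ p := by
  have hrepmono : ∀ (m : ℕ) (a b : W), a ≤ b → rep m a ≤ rep m b := by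
    intro m a b hab
    induction m with
    | zero => exact hab
    | succ n ih =>
      calc rep n a + a ≤ rep n b + a := hadd _ _ _ ih
        _ = a + rep n b := add_comm _ _
        _ ≤ b + rep n b := hadd _ _ _ hab
        _ = rep n b + b := add_comm _ _
  have hm : Monotone (fun n => rep n u : ℕ → W) :=
    monotone_nat_of_le_succ fun n => hpos (rep n u) u
  obtain ⟨p, hp⟩ := hcomplete.1 _ hm
  refine ⟨p, hp, fun w => ?_⟩
  apply hcomplete.2
  intro w' hw'
  obtain ⟨n, m, hnm⟩ := hx.2 w' w hw'
  have hxu : x n ≤ u := hu.1 ⟨n, rfl⟩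
  exact le_trans hnm (le_trans (hrepmono m _ _ hxu) (hp.1 ⟨m, rfl⟩))

end Stmt4
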